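/- Let $V_0 \in L^2([a,b]^2, \mathbb{R})$ be nonnegative and let $B: [a,b] \to [0,\infty)$ be measurable with $\int_a^b \left(\int_a^s V_0(s,t)^2\,dt\right)(1+B(s))\,ds < \infty$. Suppose $\mathbf{x}, \tilde{\mathbf{x}}: [a,b] \to \mathbb{R}^n$ and $\xi, \tilde{\xi}: [a,b] \to \mathbb{R}$ are square-integrable functions satisfying, for all $s \in [a,b]$: (i) $\|\mathbf{x}(s) - \tilde{\mathbf{x}}(s)\| \le \int_a^s V_0(s,t)\sqrt{\|\mathbf{x}(t)-\tilde{\mathbf{x}}(t)\|^2 + (\xi(t)-\tilde{\xi}(t))^2}\,dt$, and (ii) $\int_a^s (\xi(t)-\tilde{\xi}(t))^2\,dt \le B(s)\int_a^s \|\mathbf{x}(t)-\tilde{\mathbf{x}}(t)\|^2\,dt$. Then $\mathbf{x}(s) = \tilde{\mathbf{x}}(s)$ for almost every $s \in [a,b]$. -/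

import Mathlib

open MeasureTheory Set

theorem volterra_semiLipschitz_uniqueness_iteration
    {n : ℕ} {a b : ℝ} (hab : a ≤ b)
    (V0 : ℝ → ℝ → ℝ) (B : ℝ → ℝ)
    (hV0nn : ∀ s t, 0 ≤ V0 s t)
    (hV0L2 : MemLp (fun p : ℝ × ℝ => V0 p.1 p.2) 2
      (volume.restrict (Icc a b ×ˢ Icc a b)))
    (hBmeas : Measurable B) (hBnn : ∀ s, 0 ≤ B s)
    (hfin : IntegrableOn (fun s => (∫ t in a..s, (V0 s t) ^ 2) * (1 + B s)) (Icc a b))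
    (x x' : ℝ → EuclideanSpace ℝ (Fin n)) (ξ ξ' : ℝ → ℝ)
    (hx : MemLp x 2 (volume.restrict (Icc a b)))
    (hx' : MemLp x' 2 (volume.restrict (Icc a b)))
    (hξ : MemLp ξ 2 (volume.restrict (Icc a b)))
    (hξ' : MemLp ξ' 2 (volume.restrict (Icc a b)))
    (h1 : ∀ s ∈ Icc a b,
      ‖x s - x' s‖ ≤ ∫ t in a..s,
        V0 s t * Real.sqrt (‖x t - x' t‖ ^ 2 + (ξ t - ξ' t) ^ 2))
    (h2 : ∀ s ∈ Icc a b,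
      (∫ t in a..s, (ξ t - ξ' t) ^ 2) ≤ B s * ∫ t in a..s, ‖x t - x' t‖ ^ 2) :
    ∀ᵐ s ∂(volume.restrict (Icc a b)), x s = x' s := by
  classical
  set u : ℝ → ℝ := fun t => ‖x t - x' t‖ ^ 2 with hu_def
  set w : ℝ → ℝ := fun t => (ξ t - ξ' t) ^ 2 with hw_def
  have hu : IntegrableOn u (Icc a b) := ((hx.sub hx').norm).integrable_sq
  have hw : IntegrableOn w (Icc a b) := (hξ.sub hξ').integrable_sq
  have hunn : ∀ t, 0 ≤ u t := fun t => sq_nonneg _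
  have hwnn : ∀ t, 0 ≤ w t := fun t => sq_nonneg _
  have huI : ∀ c ∈ Icc a b, ∀ d ∈ Icc a b, IntervalIntegrable u volume c d := by
    intro c hc d hd
    have hsub : uIcc c d ⊆ Icc a b := by
      rw [← uIcc_of_le hab]
      exact uIcc_subset_uIcc (by rwa [uIcc_of_le hab]) (by rwa [uIcc_of_le hab])
    exact (hu.mono_set hsub).intervalIntegrable
  set Φ : ℝ → ℝ := fun s => ∫ t in a..s, u t with hΦ_def
  have hΦcont : ContinuousOn Φ (Icc a b) := by
    have := intervalIntegral.continuousOn_primitive_interval (a := a) (b := b)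
      (μ := volume) (f := u) (by rwa [uIcc_of_le hab])
    rwa [uIcc_of_le hab] at this
  have hΦnn : ∀ s ∈ Icc a b, 0 ≤ Φ s := fun s hs =>
    intervalIntegral.integral_nonneg hs.1 fun t _ => hunn t
  have hΦmono : ∀ s ∈ Icc a b, ∀ s' ∈ Icc a b, s ≤ s' → Φ s ≤ Φ s' := by
    intro s hs s' hs' hss
    have hadd : Φ s + ∫ t in s..s', u t = Φ s' :=
      intervalIntegral.integral_add_adjacent_intervals
        (huI a (left_mem_Icc.2 hab) s hs) (huI s hs s' hs')
    nlinarith [intervalIntegral.integral_nonneg (μ := volume) (f := u) hss fun t _ => hunn t]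
  set g : ℝ → ℝ := fun s => (∫ t in a..s, (V0 s t) ^ 2) * (1 + B s) with hg_def
  have hg : IntegrableOn g (Icc a b) := hfin
  have hgnn : ∀ s ∈ Icc a b, 0 ≤ g s := by
    intro s hs
    apply mul_nonneg (intervalIntegral.integral_nonneg hs.1 fun t _ => sq_nonneg _)
    linarith [hBnn s]
  -- slice integrability of V0²
  have hVsq : Integrable (fun p : ℝ × ℝ => V0 p.1 p.2 ^ 2)
      ((volume.restrict (Icc a b)).prod (volume.restrict (Icc a b))) := by
    rw [Measure.prod_restrict, ← Measure.volume_eq_prod]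
    exact hV0L2.integrable_sq
  have hslice : ∀ᵐ s ∂(volume.restrict (Icc a b)),
      IntegrableOn (fun t => V0 s t ^ 2) (Icc a b) := hVsq.prod_right_ae
  -- key pointwise bound
  have key : ∀ᵐ s ∂(volume.restrict (Icc a b)), u s ≤ g s * Φ s := by
    filter_upwards [hslice, ae_restrict_mem measurableSet_Icc] with s hVs hs
    have haS : a ≤ s := hs.1
    have hsub : Ioc a s ⊆ Icc a b :=
      Ioc_subset_Icc_self.trans (Icc_subset_Icc le_rfl hs.2)
    have hVs2 : IntegrableOn (fun t => V0 s t ^ 2) (Ioc a s) := hVs.mono_set hsub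
    have hVsm : AEStronglyMeasurable (fun t => V0 s t) (volume.restrict (Ioc a s)) := by
      have h := Real.continuous_sqrt.comp_aestronglyMeasurable hVs2.aestronglyMeasurable
      refine h.congr (Filter.Eventually.of_forall fun t => ?_)
      simp [Real.sqrt_sq (hV0nn s t)]
    have hVsL2 : MemLp (fun t => V0 s t) 2 (volume.restrict (Ioc a s)) :=
      (memLp_two_iff_integrable_sq hVsm).2 hVs2
    have huw : IntegrableOn (fun t => u t + w t) (Icc a b) := hu.add hw
    have huwI : IntegrableOn (fun t => u t + w t) (Ioc a s) := huw.mono_set hsub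
    have hsqm : AEStronglyMeasurable (fun t => Real.sqrt (u t + w t))
        (volume.restrict (Ioc a s)) :=
      Real.continuous_sqrt.comp_aestronglyMeasurable huwI.aestronglyMeasurable
    have hsqL2 : MemLp (fun t => Real.sqrt (u t + w t)) 2 (volume.restrict (Ioc a s)) := by
      refine (memLp_two_iff_integrable_sq hsqm).2 ?_
      exact huwI.congr (Filter.Eventually.of_forall fun t =>
        (Real.sq_sqrt (add_nonneg (hunn t) (hwnn t))).symm)
    have h2e : ENNReal.ofReal (2 : ℝ) = 2 := by norm_num
    have hconj : Real.HolderConjugate 2 2 := Real.HolderConjugate.two_two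
    have hCS := integral_mul_le_Lp_mul_Lq_of_nonneg (μ := volume.restrict (Ioc a s)) hconj
      (f := fun t => V0 s t) (g := fun t => Real.sqrt (u t + w t))
      (Filter.Eventually.of_forall fun t => hV0nn s t)
      (Filter.Eventually.of_forall fun t => Real.sqrt_nonneg _)
      (h2e ▸ hVsL2) (h2e ▸ hsqL2)
    -- rewrite rpow to pow in hCS
    simp only [Real.rpow_two] at hCS
    have hA_nn : 0 ≤ ∫ t in Ioc a s, V0 s t ^ 2 := integral_nonneg fun t => sq_nonneg _
    have hsq_eq : ∫ t in Ioc a s, Real.sqrt (u t + w t) ^ 2 = ∫ t in Ioc a s, (u t + w t) := by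
      exact integral_congr_ae (Filter.Eventually.of_forall fun t =>
        Real.sq_sqrt (add_nonneg (hunn t) (hwnn t)))
    rw [hsq_eq] at hCS
    have hC_nn : 0 ≤ ∫ t in Ioc a s, (u t + w t) :=
      integral_nonneg fun t => add_nonneg (hunn t) (hwnn t)
    have h1s := h1 s hs
    rw [intervalIntegral.integral_of_le haS] at h1s
    have hxb : ‖x s - x' s‖ ≤ (∫ t in Ioc a s, V0 s t ^ 2) ^ (1 / (2:ℝ)) *
        (∫ t in Ioc a s, (u t + w t)) ^ (1 / (2:ℝ)) := le_trans h1s hCS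
    have husq : u s ≤ (∫ t in Ioc a s, V0 s t ^ 2) * (∫ t in Ioc a s, (u t + w t)) := by
      have hp := pow_le_pow_left₀ (norm_nonneg (x s - x' s)) hxb 2
      calc u s = ‖x s - x' s‖ ^ 2 := rfl
        _ ≤ ((∫ t in Ioc a s, V0 s t ^ 2) ^ (1/(2:ℝ)) *
              (∫ t in Ioc a s, (u t + w t)) ^ (1/(2:ℝ))) ^ 2 := hp
        _ = (∫ t in Ioc a s, V0 s t ^ 2) * (∫ t in Ioc a s, (u t + w t)) := by
            rw [mul_pow, ← Real.rpow_natCast (_ ^ (1/(2:ℝ))) 2,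
              ← Real.rpow_natCast (_ ^ (1/(2:ℝ))) 2,
              ← Real.rpow_mul hA_nn, ← Real.rpow_mul hC_nn]
            norm_num
    have hsplit : ∫ t in Ioc a s, (u t + w t) =
        (∫ t in Ioc a s, u t) + ∫ t in Ioc a s, w t :=
      integral_add (hu.mono_set hsub) (hw.mono_set hsub)
    have hΦs : Φ s = ∫ t in Ioc a s, u t := intervalIntegral.integral_of_le haS
    have hw_le : (∫ t in Ioc a s, w t) ≤ B s * Φ s := by
      have h2s := h2 s hs
      rwa [intervalIntegral.integral_of_le haS] at h2s
    have hK_eq : (∫ t in a..s, (V0 s t) ^ 2) = ∫ t in Ioc a s, V0 s t ^ 2 :=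
      intervalIntegral.integral_of_le haS
    have hΦs_nn : 0 ≤ Φ s := hΦnn s hs
    calc u s ≤ (∫ t in Ioc a s, V0 s t ^ 2) * (∫ t in Ioc a s, (u t + w t)) := husq
      _ ≤ (∫ t in Ioc a s, V0 s t ^ 2) * ((1 + B s) * Φ s) := by
          apply mul_le_mul_of_nonneg_left _ hA_nn
          rw [hsplit, ← hΦs]
          nlinarith
      _ = g s * Φ s := by simp only [hg_def, hK_eq]; ring
  -- Grönwall-type argument via the supremum of the zero set
  set S : Set ℝ := {r ∈ Icc a b | Φ r = 0} with hS_def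
  have hS_sub : S ⊆ Icc a b := fun r hr => hr.1
  have hS_closed : IsClosed S := by
    have hpre : S = Icc a b ∩ Φ ⁻¹' {0} := by
      ext r; simp [hS_def, Set.mem_sep_iff]
    rw [hpre]
    exact hΦcont.preimage_isClosed_of_isClosed isClosed_Icc isClosed_singleton
  have haS : a ∈ S := ⟨left_mem_Icc.2 hab, by simp [hΦ_def]⟩
  have hSbdd : BddAbove S := ⟨b, fun r hr => hr.1.2⟩
  have hcS : sSup S ∈ S := hS_closed.csSup_mem ⟨a, haS⟩ hSbdd
  set c := sSup S with hc_def
  have hcI : c ∈ Icc a b := hcS.1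
  have hΦb : Φ b = 0 := by
    rcases eq_or_lt_of_le hcI.2 with h | h
    · rw [← h]; exact hcS.2
    · exfalso
      have hgc : IntegrableOn g (Icc c b) := hg.mono_set (Icc_subset_Icc hcI.1 le_rfl)
      have hΨcont : ContinuousOn (fun r => ∫ t in Ioc c r, g t) (Icc c b) :=
        intervalIntegral.continuousOn_primitive hgc
      have htend : ContinuousWithinAt (fun r => ∫ t in Ioc c r, g t) (Icc c b) c :=
        hΨcont c (left_mem_Icc.2 h.le)
      have h0 : (fun r => ∫ t in Ioc c r, g t) c = 0 := by simp
      have hev : ∀ᶠ r in nhdsWithin c (Icc c b), (∫ t in Ioc c r, g t) < 1 := by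
        refine Filter.Tendsto.eventually_lt_const (by norm_num : (0:ℝ) < 1) ?_
        have ht2 : Filter.Tendsto (fun r => ∫ t in Ioc c r, g t) (nhdsWithin c (Icc c b))
            (nhds ((fun r => ∫ t in Ioc c r, g t) c)) := htend
        simpa using ht2
      have hev2 : ∀ᶠ r in nhdsWithin c (Ioc c b), (∫ t in Ioc c r, g t) < 1 :=
        hev.filter_mono (nhdsWithin_mono c Ioc_subset_Icc_self)
      have hne : (nhdsWithin c (Ioc c b)).NeBot := by
        rw [← mem_closure_iff_nhdsWithin_neBot, closure_Ioc h.ne]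
        exact left_mem_Icc.2 h.le
      obtain ⟨d, hΨd, hdm⟩ := (hev2.and eventually_mem_nhdsWithin).exists
      have hdI : d ∈ Icc a b := ⟨hcI.1.trans hdm.1.le, hdm.2⟩
      have hsub2 : Ioc c d ⊆ Icc a b := fun t ht =>
        ⟨hcI.1.trans ht.1.le, ht.2.trans hdI.2⟩
      have hΦd_eq : Φ d = ∫ t in Ioc c d, u t := by
        have hadd := intervalIntegral.integral_add_adjacent_intervals
          (huI a (left_mem_Icc.2 hab) c hcI) (huI c hcI d hdI)
        have h' : Φ d = Φ c + ∫ t in c..d, u t := hadd.symm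
        rw [h', hcS.2, zero_add, intervalIntegral.integral_of_le hdm.1.le]
      have hkey' : ∀ᵐ t ∂(volume.restrict (Ioc c d)), u t ≤ g t * Φ d := by
        filter_upwards [ae_restrict_of_ae_restrict_of_subset hsub2 key,
          ae_restrict_mem measurableSet_Ioc] with t h1t h2t
        have htI : t ∈ Icc a b := hsub2 h2t
        have hΦtd : Φ t ≤ Φ d := hΦmono t htI d hdI (h2t.2)
        nlinarith [hgnn t htI, mul_le_mul_of_nonneg_left hΦtd (hgnn t htI)]
      have hle : Φ d ≤ (∫ t in Ioc c d, g t) * Φ d := by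
        calc Φ d = ∫ t in Ioc c d, u t := hΦd_eq
          _ ≤ ∫ t in Ioc c d, g t * Φ d :=
              setIntegral_mono_ae_restrict (hu.mono_set hsub2)
                ((hg.mono_set hsub2).mul_const _) hkey'
          _ = (∫ t in Ioc c d, g t) * Φ d := integral_mul_const _ _
      have hΦd_nn : 0 ≤ Φ d := hΦnn d hdI
      have hψ0 : 0 ≤ ∫ t in Ioc c d, g t :=
        setIntegral_nonneg measurableSet_Ioc fun t ht => hgnn t (hsub2 ht)
      have hΦd0 : Φ d = 0 := by nlinarith
      have : d ≤ c := le_csSup hSbdd ⟨hdI, hΦd0⟩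
      exact absurd this (not_le.2 hdm.1)
  -- conclude
  have hint0 : ∫ t in Ioc a b, u t = 0 := by
    have h' : Φ b = ∫ t in Ioc a b, u t := intervalIntegral.integral_of_le hab
    rw [← h', hΦb]
  have hu0 : ∀ᵐ t ∂(volume.restrict (Ioc a b)), u t = 0 := by
    have := (integral_eq_zero_iff_of_nonneg_ae
      (Filter.Eventually.of_forall fun t => hunn t)
      (hu.mono_set Ioc_subset_Icc_self)).1 hint0
    exact this
  rw [← Measure.restrict_congr_set Ioc_ae_eq_Icc]
  filter_upwards [hu0] with t ht
  have h2t : ‖x t - x' t‖ ^ 2 = 0 := ht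
  have hn : ‖x t - x' t‖ = 0 := sq_eq_zero_iff.mp h2t
  rwa [norm_eq_zero, sub_eq_zero] at hn
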